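/- With the fixed initial vectors, let (û^(1), û^(2), û^(3)) be a dual-optimal triple and let K := min_{j≤m1, l≤m3} Σ_{k≤m2} K^(1)_{jk} K^(2)_{kl}. Then L(ε·log û^(1), ε·log û^(2), ε·log û^(3)) − L(ε·log u^(0,1), ε·log u^(0,2), ε·log u^(0,3)) ≤ ε·log(‖K^(1)‖₁·‖K^(2)‖₁ / K). -/

import Mathlib

open Matrix Finset Real

noncomputable section

/-- The Hilbert projective (pseudo)metric on the positive orthant:
`d_H(u,v) = log((max_i u_i/v_i) · (max_j v_j/u_j))`. -/
def dH {m : ℕ} (u v : Fin m → ℝ) : ℝ :=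
  Real.log ((⨆ i, u i / v i) * (⨆ j, v j / u j))

/-- Birkhoff's ratio `γ(A) = max_{i,j,k,l} (A_{ik}A_{jl})/(A_{jk}A_{il})`. -/
def birkhoffGamma {n m : ℕ} (A : Matrix (Fin n) (Fin m) ℝ) : ℝ :=
  ⨆ p : (Fin n × Fin n) × Fin m × Fin m,
    A p.1.1 p.2.1 * A p.1.2 p.2.2 / (A p.1.2 p.2.1 * A p.1.1 p.2.2)

/-- Birkhoff's contraction coefficient `λ(A) = (√γ(A) − 1)/(√γ(A) + 1)`. -/
def birkhoffLambda {n m : ℕ} (A : Matrix (Fin n) (Fin m) ℝ) : ℝ :=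
  (Real.sqrt (birkhoffGamma A) - 1) / (Real.sqrt (birkhoffGamma A) + 1)

/-- The dual (Lagrangian) function for the sequentially composed OT problem with `M = 2`. -/
def dual2 {m1 m2 m3 : ℕ} (a : Fin m1 → ℝ) (b : Fin m3 → ℝ) (ε : ℝ)
    (C1 : Matrix (Fin m1) (Fin m2) ℝ) (C2 : Matrix (Fin m2) (Fin m3) ℝ)
    (f1 : Fin m1 → ℝ) (f2 : Fin m2 → ℝ) (f3 : Fin m3 → ℝ) : ℝ :=
  (∑ j, f1 j * a j) + (∑ l, f3 l * b l)
    - ε * ((∑ j, ∑ k, Real.exp ((f1 j - f2 k - C1 j k) / ε))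
      + ∑ k, ∑ l, Real.exp ((f2 k + f3 l - C2 k l) / ε))

/-- The matrix `diag(u) K diag(1/v)` induced by the first pair of Sinkhorn vectors. -/
def indMat1 {m1 m2 : ℕ} (u : Fin m1 → ℝ) (K : Matrix (Fin m1) (Fin m2) ℝ)
    (v : Fin m2 → ℝ) : Matrix (Fin m1) (Fin m2) ℝ :=
  Matrix.diagonal u * K * Matrix.diagonal (fun k => (v k)⁻¹)

/-- The matrix `diag(v) K diag(w)` induced by the second pair of Sinkhorn vectors. -/
def indMat2 {m2 m3 : ℕ} (v : Fin m2 → ℝ) (K : Matrix (Fin m2) (Fin m3) ℝ)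
    (w : Fin m3 → ℝ) : Matrix (Fin m2) (Fin m3) ℝ :=
  Matrix.diagonal v * K * Matrix.diagonal w

lemma sum_comp_update {m : ℕ} (F : Fin m → ℝ → ℝ) (s : Fin m → ℝ) (j : Fin m) (x : ℝ) :
    ∑ i, F i (Function.update s j x i) = (∑ i, F i (s i)) + (F j x - F j (s j)) := by
  have h : (fun i => F i (Function.update s j x i))
      = Function.update (fun i => F i (s i)) j (F j x) := by
    funext i
    by_cases hi : i = j
    · subst hi; simp
    · simp [Function.update_of_ne hi]
  rw [h, Finset.sum_update_of_mem (Finset.mem_univ j), Finset.sdiff_singleton_eq_erase,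
    ← Finset.add_sum_erase _ (fun i => F i (s i)) (Finset.mem_univ j)]
  ring

lemma marginal_eq {w r : ℝ} (hw : 0 < w) (hr : 0 < r)
    (h : Real.log (w / r) * w ≤ w - r) : r = w := by
  by_contra hne
  have hx : 0 < r / w := div_pos hr hw
  have hne1 : r / w ≠ 1 := by
    intro h1
    exact hne ((div_eq_one_iff_eq hw.ne').mp h1)
  have hlt : Real.log (r / w) < r / w - 1 := Real.log_lt_sub_one_of_pos hx hne1
  have hlog : Real.log (w / r) = - Real.log (r / w) := by
    rw [← Real.log_inv]
    congr 1
    field_simp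
  have h2 : Real.log (r / w) * w < (r / w - 1) * w := mul_lt_mul_of_pos_right hlt hw
  have h3 : (r / w - 1) * w = r - w := by field_simp
  rw [hlog] at h
  nlinarith

/-- **Gap between initial and optimal dual value** (Lem. 4.4): with the fixed initial
vectors and a dual-optimal triple `(û¹,û²,û³)`,
`L(û) − L(u⁰) ≤ ε·log(‖K¹‖₁‖K²‖₁/K)` where `K = min_{j,l} Σ_k K¹_{jk}K²_{kl}`. -/
theorem sinkhorn_initial_dual_gap
    {m1 m2 m3 : ℕ} (hm1 : 0 < m1) (hm2 : 0 < m2) (hm3 : 0 < m3)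
    (C1 : Matrix (Fin m1) (Fin m2) ℝ) (C2 : Matrix (Fin m2) (Fin m3) ℝ)
    (hC1 : ∀ j k, 0 ≤ C1 j k) (hC2 : ∀ k l, 0 ≤ C2 k l)
    (a : Fin m1 → ℝ) (b : Fin m3 → ℝ)
    (ha : ∀ j, 0 < a j) (hb : ∀ l, 0 < b l)
    (hasum : ∑ j, a j = 1) (hbsum : ∑ l, b l = 1)
    (ε : ℝ) (hε : 0 < ε)
    (K1 : Matrix (Fin m1) (Fin m2) ℝ) (K2 : Matrix (Fin m2) (Fin m3) ℝ)
    (hK1 : ∀ j k, K1 j k = Real.exp (-C1 j k / ε))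
    (hK2 : ∀ k l, K2 k l = Real.exp (-C2 k l / ε))
    (u01 : Fin m1 → ℝ) (u02 : Fin m2 → ℝ) (u03 : Fin m3 → ℝ)
    (hinit1 : u01 = fun _ => 1 / (∑ j, ∑ k, K1 j k))
    (hinit2 : u02 = fun _ => 1)
    (hinit3 : u03 = fun _ => 1 / (∑ k, ∑ l, K2 k l))
    (uh1 : Fin m1 → ℝ) (uh2 : Fin m2 → ℝ) (uh3 : Fin m3 → ℝ)
    (hpos1 : ∀ j, 0 < uh1 j) (hpos2 : ∀ k, 0 < uh2 k) (hpos3 : ∀ l, 0 < uh3 l)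
    (hopt : ∀ (f1 : Fin m1 → ℝ) (f2 : Fin m2 → ℝ) (f3 : Fin m3 → ℝ),
      dual2 a b ε C1 C2 f1 f2 f3 ≤
        dual2 a b ε C1 C2 (fun j => ε * Real.log (uh1 j))
          (fun k => ε * Real.log (uh2 k)) (fun l => ε * Real.log (uh3 l)))
    (Kmin : ℝ)
    (hKmin : Kmin = ⨅ p : Fin m1 × Fin m3, ∑ k, K1 p.1 k * K2 k p.2) :
    dual2 a b ε C1 C2 (fun j => ε * Real.log (uh1 j))
        (fun k => ε * Real.log (uh2 k)) (fun l => ε * Real.log (uh3 l))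
      - dual2 a b ε C1 C2 (fun j => ε * Real.log (u01 j))
        (fun k => ε * Real.log (u02 k)) (fun l => ε * Real.log (u03 l))
      ≤ ε * Real.log ((∑ j, ∑ k, K1 j k) * (∑ k, ∑ l, K2 k l) / Kmin) := by
  have hεne : ε ≠ 0 := hε.ne'
  haveI : NeZero m1 := ⟨hm1.ne'⟩
  haveI : NeZero m2 := ⟨hm2.ne'⟩
  haveI : NeZero m3 := ⟨hm3.ne'⟩
  set f1h : Fin m1 → ℝ := fun j => ε * Real.log (uh1 j) with hf1h
  set f2h : Fin m2 → ℝ := fun k => ε * Real.log (uh2 k) with hf2h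
  set f3h : Fin m3 → ℝ := fun l => ε * Real.log (uh3 l) with hf3h
  set r : Fin m1 → ℝ := fun j => ∑ k, Real.exp ((f1h j - f2h k - C1 j k) / ε) with hrdef
  set s : Fin m3 → ℝ := fun l => ∑ k, Real.exp ((f2h k + f3h l - C2 k l) / ε) with hsdef
  have hr : ∀ j, 0 < r j := fun j =>
    Finset.sum_pos (fun k _ => Real.exp_pos _) Finset.univ_nonempty
  have hs : ∀ l, 0 < s l := fun l =>
    Finset.sum_pos (fun k _ => Real.exp_pos _) Finset.univ_nonempty
  have hK1pos : ∀ j k, 0 < K1 j k := fun j k => by rw [hK1]; exact Real.exp_pos _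
  have hK2pos : ∀ k l, 0 < K2 k l := fun k l => by rw [hK2]; exact Real.exp_pos _
  -- Step A : r j = a j
  have hra : ∀ j, r j = a j := by
    intro j
    set t : ℝ := ε * Real.log (a j / r j) with ht
    have hexp : Real.exp (t / ε) = a j / r j := by
      rw [ht, show ε * Real.log (a j / r j) / ε = Real.log (a j / r j) by field_simp]
      exact Real.exp_log (div_pos (ha j) (hr j))
    have hkey := hopt (Function.update f1h j (f1h j + t)) f2h f3h
    have hdual : dual2 a b ε C1 C2 (Function.update f1h j (f1h j + t)) f2h f3h
        = dual2 a b ε C1 C2 f1h f2h f3h + t * a j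
          - ε * ((Real.exp (t / ε) - 1) * r j) := by
      unfold dual2
      rw [sum_comp_update (fun i y => y * a i) f1h j (f1h j + t),
        sum_comp_update (fun i y => ∑ k, Real.exp ((y - f2h k - C1 i k) / ε)) f1h j
          (f1h j + t)]
      have hterm : (∑ k, Real.exp ((f1h j + t - f2h k - C1 j k) / ε))
          = Real.exp (t / ε) * r j := by
        rw [hrdef, Finset.mul_sum]
        refine Finset.sum_congr rfl fun k _ => ?_
        rw [← Real.exp_add]
        congr 1
        field_simp
        ring
      rw [hterm]
      ring
    rw [hdual, hexp] at hkey
    have h3 : (a j / r j - 1) * r j = a j - r j := by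
      rw [sub_mul, div_mul_cancel₀ _ (hr j).ne', one_mul]
    rw [h3] at hkey
    have h2 : ε * (Real.log (a j / r j) * a j) ≤ ε * (a j - r j) := by
      have : t * a j ≤ ε * (a j - r j) := by linarith
      calc ε * (Real.log (a j / r j) * a j) = (ε * Real.log (a j / r j)) * a j := by ring
        _ ≤ ε * (a j - r j) := this
    exact marginal_eq (ha j) (hr j) (le_of_mul_le_mul_left h2 hε)
  -- Step B : s l = b l
  have hsb : ∀ l, s l = b l := by
    intro l
    set t : ℝ := ε * Real.log (b l / s l) with ht
    have hexp : Real.exp (t / ε) = b l / s l := by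
      rw [ht, show ε * Real.log (b l / s l) / ε = Real.log (b l / s l) by field_simp]
      exact Real.exp_log (div_pos (hb l) (hs l))
    have hkey := hopt f1h f2h (Function.update f3h l (f3h l + t))
    have hswap : ∀ g : Fin m3 → ℝ,
        (∑ k, ∑ l', Real.exp ((f2h k + g l' - C2 k l') / ε))
          = ∑ l', ∑ k, Real.exp ((f2h k + g l' - C2 k l') / ε) := fun g =>
      Finset.sum_comm
    have hdual : dual2 a b ε C1 C2 f1h f2h (Function.update f3h l (f3h l + t))
        = dual2 a b ε C1 C2 f1h f2h f3h + t * b l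
          - ε * ((Real.exp (t / ε) - 1) * s l) := by
      unfold dual2
      rw [hswap (Function.update f3h l (f3h l + t)), hswap f3h,
        sum_comp_update (fun i y => y * b i) f3h l (f3h l + t),
        sum_comp_update (fun i y => ∑ k, Real.exp ((f2h k + y - C2 k i) / ε)) f3h l
          (f3h l + t)]
      have hterm : (∑ k, Real.exp ((f2h k + (f3h l + t) - C2 k l) / ε))
          = Real.exp (t / ε) * s l := by
        rw [hsdef, Finset.mul_sum]
        refine Finset.sum_congr rfl fun k _ => ?_
        rw [← Real.exp_add]
        congr 1
        field_simp
        ring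
      rw [hterm]
      ring
    rw [hdual, hexp] at hkey
    have h3 : (b l / s l - 1) * s l = b l - s l := by
      rw [sub_mul, div_mul_cancel₀ _ (hs l).ne', one_mul]
    rw [h3] at hkey
    have h2 : ε * (Real.log (b l / s l) * b l) ≤ ε * (b l - s l) := by
      have : t * b l ≤ ε * (b l - s l) := by linarith
      calc ε * (Real.log (b l / s l) * b l) = (ε * Real.log (b l / s l)) * b l := by ring
        _ ≤ ε * (b l - s l) := this
    exact marginal_eq (hb l) (hs l) (le_of_mul_le_mul_left h2 hε)
  -- Step C : value of L at the optimum
  have hS1 : (∑ j, ∑ k, Real.exp ((f1h j - f2h k - C1 j k) / ε)) = 1 := by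
    calc (∑ j, ∑ k, Real.exp ((f1h j - f2h k - C1 j k) / ε)) = ∑ j, r j := rfl
      _ = ∑ j, a j := Finset.sum_congr rfl fun j _ => hra j
      _ = 1 := hasum
  have hS2 : (∑ k, ∑ l, Real.exp ((f2h k + f3h l - C2 k l) / ε)) = 1 := by
    rw [Finset.sum_comm]
    calc (∑ l, ∑ k, Real.exp ((f2h k + f3h l - C2 k l) / ε)) = ∑ l, s l := rfl
      _ = ∑ l, b l := Finset.sum_congr rfl fun l _ => hsb l
      _ = 1 := hbsum
  have hLhat : dual2 a b ε C1 C2 f1h f2h f3h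
      = (∑ j, f1h j * a j) + (∑ l, f3h l * b l) - 2 * ε := by
    unfold dual2
    rw [hS1, hS2]
    ring
  -- Kmin facts
  have hgpos : ∀ p : Fin m1 × Fin m3, 0 < ∑ k, K1 p.1 k * K2 k p.2 := fun p =>
    Finset.sum_pos (fun k _ => mul_pos (hK1pos _ _) (hK2pos _ _)) Finset.univ_nonempty
  have hKminle : ∀ p : Fin m1 × Fin m3, Kmin ≤ ∑ k, K1 p.1 k * K2 k p.2 := by
    intro p
    rw [hKmin]
    exact ciInf_le (Set.Finite.bddBelow (Set.finite_range _)) p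
  have hKminpos : 0 < Kmin := by
    obtain ⟨p, hp⟩ := Finite.exists_min
      (fun p : Fin m1 × Fin m3 => ∑ k, K1 p.1 k * K2 k p.2)
    have : Kmin = ∑ k, K1 p.1 k * K2 k p.2 := by
      rw [hKmin]
      exact le_antisymm (ciInf_le (Set.Finite.bddBelow (Set.finite_range _)) p)
        (le_ciInf hp)
    rw [this]
    exact hgpos p
  -- marginal identities in multiplicative form
  have hXj : ∀ j, uh1 j * (∑ k, (uh2 k)⁻¹ * K1 j k) = a j := by
    intro j
    rw [← hra j, hrdef, Finset.mul_sum]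
    refine Finset.sum_congr rfl fun k _ => ?_
    rw [hK1]
    have harg : (f1h j - f2h k - C1 j k) / ε
        = Real.log (uh1 j) + (Real.log ((uh2 k)⁻¹) + -C1 j k / ε) := by
      rw [Real.log_inv, hf1h, hf2h]
      field_simp
      ring
    rw [harg, Real.exp_add, Real.exp_add, Real.exp_log (hpos1 j),
      Real.exp_log (inv_pos.mpr (hpos2 k))]
  have hYl : ∀ l, uh3 l * (∑ k, uh2 k * K2 k l) = b l := by
    intro l
    rw [← hsb l, hsdef, Finset.mul_sum]
    refine Finset.sum_congr rfl fun k _ => ?_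
    rw [hK2]
    have harg : (f2h k + f3h l - C2 k l) / ε
        = Real.log (uh3 l) + (Real.log (uh2 k) + -C2 k l / ε) := by
      rw [hf2h, hf3h]
      field_simp
      ring
    rw [harg, Real.exp_add, Real.exp_add, Real.exp_log (hpos3 l),
      Real.exp_log (hpos2 k)]
  -- Step D : pointwise bound on f1h j + f3h l
  have hfkey : ∀ j l, f1h j + f3h l ≤ ε * Real.log (1 / Kmin) := by
    intro j l
    have hsum_le : Kmin ≤ (∑ k, (uh2 k)⁻¹ * K1 j k) * (∑ k, uh2 k * K2 k l) := by
      refine le_trans (hKminle (j, l)) ?_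
      rw [Finset.sum_mul_sum]
      calc (∑ k, K1 j k * K2 k l)
          = ∑ k, ((uh2 k)⁻¹ * K1 j k) * (uh2 k * K2 k l) := by
            refine Finset.sum_congr rfl fun k _ => ?_
            have h0 : ((uh2 k)⁻¹ * K1 j k) * (uh2 k * K2 k l)
                = ((uh2 k)⁻¹ * uh2 k) * (K1 j k * K2 k l) := by ring
            rw [h0, inv_mul_cancel₀ (hpos2 k).ne', one_mul]
        _ ≤ ∑ k, ∑ k', ((uh2 k)⁻¹ * K1 j k) * (uh2 k' * K2 k' l) := by
            refine Finset.sum_le_sum fun k _ => ?_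
            refine Finset.single_le_sum
              (f := fun k' => ((uh2 k)⁻¹ * K1 j k) * (uh2 k' * K2 k' l))
              (fun k' _ => ?_) (Finset.mem_univ k)
            exact mul_nonneg
              (mul_nonneg (inv_nonneg.mpr (hpos2 k).le) (hK1pos j k).le)
              (mul_nonneg (hpos2 k').le (hK2pos k' l).le)
    have hX : 0 < ∑ k, (uh2 k)⁻¹ * K1 j k :=
      Finset.sum_pos (fun k _ => mul_pos (inv_pos.mpr (hpos2 k)) (hK1pos j k))
        Finset.univ_nonempty
    have hY : 0 < ∑ k, uh2 k * K2 k l :=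
      Finset.sum_pos (fun k _ => mul_pos (hpos2 k) (hK2pos k l)) Finset.univ_nonempty
    have h1 : uh1 j * uh3 l * Kmin ≤ a j * b l := by
      calc uh1 j * uh3 l * Kmin
          ≤ uh1 j * uh3 l * ((∑ k, (uh2 k)⁻¹ * K1 j k) * (∑ k, uh2 k * K2 k l)) :=
            mul_le_mul_of_nonneg_left hsum_le
              (mul_pos (hpos1 j) (hpos3 l)).le
        _ = (uh1 j * ∑ k, (uh2 k)⁻¹ * K1 j k) * (uh3 l * ∑ k, uh2 k * K2 k l) := by
            ring
        _ = a j * b l := by rw [hXj j, hYl l]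
    have haj1 : a j ≤ 1 := hasum ▸ Finset.single_le_sum
      (fun i _ => (ha i).le) (Finset.mem_univ j)
    have hbl1 : b l ≤ 1 := hbsum ▸ Finset.single_le_sum
      (fun i _ => (hb i).le) (Finset.mem_univ l)
    have hab1 : a j * b l ≤ 1 := mul_le_one₀ haj1 (hb l).le hbl1
    have h2 : uh1 j * uh3 l ≤ 1 / Kmin := by
      rw [le_div_iff₀ hKminpos]
      linarith
    have hlog : Real.log (uh1 j * uh3 l) ≤ Real.log (1 / Kmin) :=
      Real.log_le_log (mul_pos (hpos1 j) (hpos3 l)) h2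
    have : f1h j + f3h l = ε * Real.log (uh1 j * uh3 l) := by
      rw [Real.log_mul (hpos1 j).ne' (hpos3 l).ne', hf1h, hf3h]
      ring
    rw [this]
    exact mul_le_mul_of_nonneg_left hlog hε.le
  -- Step E : bound on the linear part
  have hE : (∑ j, f1h j * a j) + (∑ l, f3h l * b l) ≤ ε * Real.log (1 / Kmin) := by
    have hsplit : (∑ j, f1h j * a j) + (∑ l, f3h l * b l)
        = ∑ j, ∑ l, (f1h j + f3h l) * (a j * b l) := by
      have h1 : ∀ j, (∑ l, (f1h j + f3h l) * (a j * b l))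
          = f1h j * a j * (∑ l, b l) + a j * (∑ l, f3h l * b l) := by
        intro j
        rw [Finset.mul_sum, Finset.mul_sum, ← Finset.sum_add_distrib]
        refine Finset.sum_congr rfl fun l _ => ?_
        ring
      rw [Finset.sum_congr rfl fun j _ => h1 j, hbsum, Finset.sum_add_distrib]
      simp only [mul_one]
      rw [← Finset.sum_mul, hasum, one_mul]
    rw [hsplit]
    calc (∑ j, ∑ l, (f1h j + f3h l) * (a j * b l))
        ≤ ∑ j, ∑ l, (ε * Real.log (1 / Kmin)) * (a j * b l) := by
          refine Finset.sum_le_sum fun j _ => Finset.sum_le_sum fun l _ => ?_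
          exact mul_le_mul_of_nonneg_right (hfkey j l)
            (mul_nonneg (ha j).le (hb l).le)
      _ = ε * Real.log (1 / Kmin) := by
          have h4 : (∑ j, ∑ l, (ε * Real.log (1 / Kmin)) * (a j * b l))
              = (ε * Real.log (1 / Kmin)) * ∑ j, ∑ l, a j * b l := by
            rw [Finset.mul_sum]
            refine Finset.sum_congr rfl fun j _ => ?_
            rw [Finset.mul_sum]
          have h5 : (∑ j, ∑ l, a j * b l) = (∑ j, a j) * (∑ l, b l) := by
            rw [Finset.sum_mul_sum]
          rw [h4, h5, hasum, hbsum]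
          ring
  -- Step F : value at the initial vectors
  set S1tot : ℝ := ∑ j, ∑ k, K1 j k with hS1tot
  set S2tot : ℝ := ∑ k, ∑ l, K2 k l with hS2tot
  have hS1pos : 0 < S1tot :=
    Finset.sum_pos (fun j _ => Finset.sum_pos (fun k _ => hK1pos j k)
      Finset.univ_nonempty) Finset.univ_nonempty
  have hS2pos : 0 < S2tot :=
    Finset.sum_pos (fun k _ => Finset.sum_pos (fun l _ => hK2pos k l)
      Finset.univ_nonempty) Finset.univ_nonempty
  have hinitval : dual2 a b ε C1 C2 (fun j => ε * Real.log (u01 j))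
      (fun k => ε * Real.log (u02 k)) (fun l => ε * Real.log (u03 l))
      = ε * Real.log (1 / S1tot) + ε * Real.log (1 / S2tot) - 2 * ε := by
    subst hinit1 hinit2 hinit3
    unfold dual2
    simp only [Real.log_one, mul_zero]
    have e1 : ∀ (j : Fin m1) (k : Fin m2),
        Real.exp ((ε * Real.log (1 / S1tot) - 0 - C1 j k) / ε)
          = (1 / S1tot) * K1 j k := by
      intro j k
      rw [hK1, show (ε * Real.log (1 / S1tot) - 0 - C1 j k) / ε
          = Real.log (1 / S1tot) + -C1 j k / ε by field_simp; ring,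
        Real.exp_add, Real.exp_log (by positivity)]
    have e2 : ∀ (k : Fin m2) (l : Fin m3),
        Real.exp ((0 + ε * Real.log (1 / S2tot) - C2 k l) / ε)
          = (1 / S2tot) * K2 k l := by
      intro k l
      rw [hK2, show (0 + ε * Real.log (1 / S2tot) - C2 k l) / ε
          = Real.log (1 / S2tot) + -C2 k l / ε by field_simp; ring,
        Real.exp_add, Real.exp_log (by positivity)]
    have hE1 : (∑ j, ∑ k, Real.exp ((ε * Real.log (1 / S1tot) - 0 - C1 j k) / ε)) = 1 := by
      calc (∑ j, ∑ k, Real.exp ((ε * Real.log (1 / S1tot) - 0 - C1 j k) / ε))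
          = ∑ j, ∑ k, (1 / S1tot) * K1 j k :=
            Finset.sum_congr rfl fun j _ => Finset.sum_congr rfl fun k _ => e1 j k
        _ = (1 / S1tot) * S1tot := by
            simp only [← Finset.mul_sum]; rfl
        _ = 1 := by field_simp
    have hE2 : (∑ k, ∑ l, Real.exp ((0 + ε * Real.log (1 / S2tot) - C2 k l) / ε)) = 1 := by
      calc (∑ k, ∑ l, Real.exp ((0 + ε * Real.log (1 / S2tot) - C2 k l) / ε))
          = ∑ k, ∑ l, (1 / S2tot) * K2 k l :=
            Finset.sum_congr rfl fun k _ => Finset.sum_congr rfl fun l _ => e2 k l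
        _ = (1 / S2tot) * S2tot := by
            simp only [← Finset.mul_sum]; rfl
        _ = 1 := by field_simp
    rw [hE1, hE2, ← Finset.mul_sum, ← Finset.mul_sum, hasum, hbsum]
    ring
  -- Conclusion
  rw [hLhat, hinitval]
  have hiK : Real.log (1 / Kmin) = -Real.log Kmin := by rw [one_div, Real.log_inv]
  have hiS1 : Real.log (1 / S1tot) = -Real.log S1tot := by rw [one_div, Real.log_inv]
  have hiS2 : Real.log (1 / S2tot) = -Real.log S2tot := by rw [one_div, Real.log_inv]
  have hR : Real.log (S1tot * S2tot / Kmin)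
      = Real.log S1tot + Real.log S2tot - Real.log Kmin := by
    rw [Real.log_div (by positivity) hKminpos.ne', Real.log_mul hS1pos.ne' hS2pos.ne']
  rw [hiK] at hE
  rw [hiS1, hiS2, hR]
  ring_nf
  ring_nf at hE
  linarith
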